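/- Let G = (V, E) be a finite acyclic digraph with exactly one source s, and let (V1, E1), (V2, E2) be a separation of G along a pair {u, v} of distinct vertices with s ∈ V1. If v has at least one incoming edge in E2, then u dominates v in H2 = (V2, E2), i.e., there is a directed path from u to v using only edges of E2. -/

import Mathlib

lemma wf_of_acyclic {α : Type*} [DecidableEq α] (E2 : Finset (α × α))
    (hirr : ∀ x : α, ¬ Relation.TransGen (fun a b => (a, b) ∈ E2) x x) :
    WellFounded (fun a b : α => (a, b) ∈ E2) := by
  set R := fun a b : α => (a, b) ∈ E2 with hR
  set D : Finset α := E2.image Prod.fst ∪ E2.image Prod.snd with hD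
  have hmemD : ∀ {a b : α}, R a b → a ∈ D ∧ b ∈ D := by
    intro a b hab
    constructor
    · exact Finset.mem_union_left _ (Finset.mem_image.2 ⟨(a, b), hab, rfl⟩)
    · exact Finset.mem_union_right _ (Finset.mem_image.2 ⟨(a, b), hab, rfl⟩)
  let r' : {x // x ∈ D} → {x // x ∈ D} → Prop := fun a b => R a.1 b.1
  have hlift : ∀ (a b : {x // x ∈ D}), Relation.TransGen r' a b →
      Relation.TransGen R a.1 b.1 := by
    intro a b h
    induction h with
    | single h => exact Relation.TransGen.single h
    | tail _ h ih => exact Relation.TransGen.tail ih h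
  haveI : IsTrans {x // x ∈ D} (Relation.TransGen r') := inferInstance
  haveI : IsIrrefl {x // x ∈ D} (Relation.TransGen r') :=
    ⟨fun a h => hirr a.1 (hlift a a h)⟩
  have hwf' : WellFounded (Relation.TransGen r') :=
    Finite.wellFounded_of_trans_of_irrefl _
  have hwfr' : WellFounded r' := Subrelation.wf (fun h => Relation.TransGen.single h) hwf'
  have haccD : ∀ a : {x // x ∈ D}, Acc R a.1 := by
    intro a
    induction a using hwfr'.induction with
    | _ a ih =>
      refine Acc.intro _ (fun w hw => ?_)
      exact ih ⟨w, (hmemD hw).1⟩ hw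
  constructor
  intro x
  exact Acc.intro _ (fun w hw => haccD ⟨w, (hmemD hw).1⟩)

/-- `x` dominates `y` in the digraph with edge set `E`: there is a directed
path with at least one edge from `x` to `y`. -/
def Dominates {α : Type*} (E : Finset (α × α)) (x y : α) : Prop :=
  Relation.TransGen (fun a b => (a, b) ∈ E) x y

/-- A separation of the finite digraph `(V, E)` along the pair `{u, v}` of
distinct vertices into `H1 = (V1, E1)` and `H2 = (V2, E2)`. -/
structure Separation {α : Type*} [DecidableEq α] (V : Finset α) (E : Finset (α × α))
    (u v : α) (V1 V2 : Finset α) (E1 E2 : Finset (α × α)) : Prop where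
  ne : u ≠ v
  vUnion : V1 ∪ V2 = V
  vInter : V1 ∩ V2 = {u, v}
  eDisjoint : Disjoint E1 E2
  eUnion : E1 ∪ E2 = E
  mem1 : ∀ e ∈ E1, e.1 ∈ V1 ∧ e.2 ∈ V1
  mem2 : ∀ e ∈ E2, e.1 ∈ V2 ∧ e.2 ∈ V2
/-- A vertex `w` is a source of the digraph `(V, E)`: it belongs to `V` and
has no incoming edge in `E`. -/
def IsSource {α : Type*} (V : Finset α) (E : Finset (α × α)) (w : α) : Prop :=
  w ∈ V ∧ ∀ e ∈ E, e.2 ≠ w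

/-- In an acyclic single-source digraph whose source lies in `V1`, if `v` has
an incoming edge in `E2` then `u` dominates `v` in `H2`. -/
theorem stmt5 {α : Type*} [DecidableEq α] (V V1 V2 : Finset α)
    (E E1 E2 : Finset (α × α)) (u v s : α)
    (hsep : Separation V E u v V1 V2 E1 E2)
    (hacyc : ∀ x : α, ¬ Dominates E x x)
    (hsrc : IsSource V E s) (huniq : ∀ w : α, IsSource V E w → w = s)
    (hs1 : s ∈ V1)
    (hin : ∃ e ∈ E2, e.2 = v) :
    Dominates E2 u v := by
  have hE2subE : ∀ {a b : α}, (a, b) ∈ E2 → (a, b) ∈ E := by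
    intro a b h; rw [← hsep.eUnion]; exact Finset.mem_union_right _ h
  have hmono : ∀ {a b : α}, Relation.TransGen (fun a b => (a, b) ∈ E2) a b →
      Relation.TransGen (fun a b => (a, b) ∈ E) a b := by
    intro a b h
    refine Relation.TransGen.mono ?_ a b h
    intro a b hab; exact hE2subE hab
  have hirr2 : ∀ x : α, ¬ Relation.TransGen (fun a b => (a, b) ∈ E2) x x :=
    fun x h => hacyc x (hmono h)
  have hwf := wf_of_acyclic E2 hirr2
  -- Main backward-walk lemma
  have L : ∀ x : α, x ∈ V2 → (x = v ∨ Dominates E2 x v) → (∃ w, (w, x) ∈ E2) →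
      Relation.ReflTransGen (fun a b => (a, b) ∈ E2) u x := by
    intro x
    induction x using hwf.induction with
    | _ x ih =>
      intro hxV2 hxv ⟨w, hwx⟩
      have hwV2 : w ∈ V2 := (hsep.mem2 (w, x) hwx).1
      by_cases hwu : w = u
      · subst hwu; exact Relation.ReflTransGen.single hwx
      -- w ≠ v:
      have hwv : w ≠ v := by
        intro h; subst h
        rcases hxv with rfl | hdom
        · exact hirr2 x (Relation.TransGen.single hwx)
        · exact hirr2 w (Relation.TransGen.head hwx hdom)
      -- w ≠ s:
      have hws : w ≠ s := by
        intro h; subst h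
        have : w ∈ V1 ∩ V2 := Finset.mem_inter.2 ⟨hs1, hwV2⟩
        rw [hsep.vInter] at this
        rcases Finset.mem_insert.1 this with h1 | h2
        · exact hwu h1
        · exact hwv (Finset.mem_singleton.1 h2)
      have hwV : w ∈ V := by
        rw [← hsep.vUnion]; exact Finset.mem_union_right _ hwV2
      -- w is not a source, so it has an incoming edge
      have hnots : ¬ IsSource V E w := fun h => hws (huniq w h)
      have : ∃ e ∈ E, e.2 = w := by
        by_contra hc
        push_neg at hc
        exact hnots ⟨hwV, fun e he => hc e he⟩
      obtain ⟨e, heE, he2⟩ := this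
      have heE2 : e ∈ E2 := by
        rw [← hsep.eUnion] at heE
        rcases Finset.mem_union.1 heE with h1 | h2
        · exfalso
          have hwV1 : w ∈ V1 := he2 ▸ (hsep.mem1 e h1).2
          have : w ∈ V1 ∩ V2 := Finset.mem_inter.2 ⟨hwV1, hwV2⟩
          rw [hsep.vInter] at this
          rcases Finset.mem_insert.1 this with h1' | h2'
          · exact hwu h1'
          · exact hwv (Finset.mem_singleton.1 h2')
        · exact h2
      have hwdom : Dominates E2 w v := by
        rcases hxv with rfl | hdom
        · exact Relation.TransGen.single hwx
        · exact Relation.TransGen.head hwx hdom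
      have huw : Relation.ReflTransGen (fun a b => (a, b) ∈ E2) u w := by
        refine ih w hwx hwV2 (Or.inr hwdom) ⟨e.1, ?_⟩
        have : (e.1, e.2) ∈ E2 := by simpa using heE2
        rwa [he2] at this
      exact Relation.ReflTransGen.tail huw hwx
  obtain ⟨e, heE2, he2⟩ := hin
  have hvV2 : v ∈ V2 := he2 ▸ (hsep.mem2 e heE2).2
  have huv := L v hvV2 (Or.inl rfl) ⟨e.1, by rw [← he2]; simpa using heE2⟩
  rcases (Relation.reflTransGen_iff_eq_or_transGen.1 huv) with h | h
  · exact absurd h.symm hsep.ne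
  · exact h
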